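/- For any interval graph G, there exists an interval graph G̃ such that G̃ contains G as an induced subgraph and G̃ is the phylogeny graph of a doubly partial order. -/

import Mathlib

/-- `prec x y` means `x₁ < y₁` and `x₂ < y₂`, written `x ≺ y`. -/
def prec (x y : ℝ × ℝ) : Prop := x.1 < y.1 ∧ x.2 < y.2

/-- The phylogeny graph of the doubly partial order on a finite set
`V ⊆ ℝ²` (arcs `(x,v)` exactly when `v ≺ x`). -/
def phylogenyGraph (V : Finset (ℝ × ℝ)) : SimpleGraph {p : ℝ × ℝ // p ∈ V} where
  Adj u v := u ≠ v ∧
    (prec u.1 v.1 ∨ prec v.1 u.1 ∨ ∃ z ∈ V, prec z u.1 ∧ prec z v.1)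
  symm := by
    constructor
    intro u v h
    exact ⟨Ne.symm h.1, by tauto⟩
  loopless := by
    constructor
    intro u h
    exact h.1 rfl

/-- A graph is an interval graph if there is an assignment of closed real
intervals to its vertices such that distinct vertices are adjacent iff the
corresponding intervals intersect. -/
def IsIntervalGraph {α : Type*} (G : SimpleGraph α) : Prop :=
  ∃ J : α → Set ℝ,
    (∀ v, ∃ a b : ℝ, a ≤ b ∧ J v = Set.Icc a b) ∧
    (∀ u w, u ≠ w → (G.Adj u w ↔ (J u ∩ J w).Nonempty))

/-- For any (finite) interval graph `G` there is an interval graph `G̃` which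
contains `G` as an induced subgraph and which is the phylogeny graph of a
doubly partial order. -/
theorem exists_phylogeny_extension_of_intervalGraph {α : Type*} [Fintype α]
    (G : SimpleGraph α) (hG : IsIntervalGraph G) :
    ∃ V : Finset (ℝ × ℝ),
      IsIntervalGraph (phylogenyGraph V) ∧
      ∃ f : α ↪ {p : ℝ × ℝ // p ∈ V},
        ∀ a b : α, (phylogenyGraph V).Adj (f a) (f b) ↔ G.Adj a b := by
  classical
  obtain ⟨J0, hJ0, hAdj0⟩ := hG
  choose A B hAB hJeq using hJ0
  have hAdj : ∀ u w : α, u ≠ w → (G.Adj u w ↔ (A u ≤ B w ∧ A w ≤ B u)) := by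
    intro u w huw
    rw [hAdj0 u w huw, hJeq, hJeq, Set.Icc_inter_Icc, Set.nonempty_Icc,
      max_le_iff, le_min_iff, le_min_iff]
    constructor
    · rintro ⟨⟨_, h2⟩, h3, _⟩; exact ⟨h2, h3⟩
    · rintro ⟨h1, h2⟩; exact ⟨⟨hAB u, h1⟩, h2, hAB w⟩
  set n : ℕ := Fintype.card α with hn
  set k : α → ℕ := fun v => ((Fintype.equivFin α) v : ℕ) with hk
  have hk_lt : ∀ v, k v < n := fun v => ((Fintype.equivFin α) v).2
  have hk_inj : Function.Injective k := by
    intro u v h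
    exact (Fintype.equivFin α).injective (Fin.ext h)
  set E : Finset ℝ := Finset.univ.image A ∪ Finset.univ.image B with hE
  have hAE : ∀ v, A v ∈ E := fun v =>
    Finset.mem_union_left _ (Finset.mem_image_of_mem A (Finset.mem_univ v))
  have hBE : ∀ v, B v ∈ E := fun v =>
    Finset.mem_union_right _ (Finset.mem_image_of_mem B (Finset.mem_univ v))
  clear_value n k E
  set Dset : Finset ℝ := ((E ×ˢ E).image fun q => q.1 - q.2).filter (fun x => 0 < x) with hD
  set g : ℝ := if h : Dset.Nonempty then Dset.min' h else 1 with hg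
  have hg_pos : 0 < g := by
    rw [hg]
    split_ifs with h
    · have := Dset.min'_mem h
      exact (Finset.mem_filter.1 this).2
    · norm_num
  have hgap : ∀ x ∈ E, ∀ y ∈ E, x < y → g ≤ y - x := by
    intro x hx y hy hxy
    have hmem : y - x ∈ Dset := by
      rw [Finset.mem_filter]
      refine ⟨Finset.mem_image.2 ⟨(y, x), Finset.mem_product.2 ⟨hy, hx⟩, rfl⟩, by linarith⟩
    rw [hg, dif_pos ⟨_, hmem⟩]
    exact Finset.min'_le _ _ hmem
  clear_value Dset g
  set η : ℝ := g / (2 * (n : ℝ) + 2) with hηdef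
  have hden : (0:ℝ) < 2 * (n : ℝ) + 2 := by positivity
  have hη_pos : 0 < η := div_pos hg_pos hden
  have hηg : η * (2 * (n : ℝ) + 2) = g := div_mul_cancel₀ g (ne_of_gt hden)
  set δ : ℝ := η / 2 with hδdef
  have hδ_pos : 0 < δ := by rw [hδdef]; positivity
  have hδη : δ < η := by rw [hδdef]; linarith
  have hηltg : η < g := by nlinarith [Nat.cast_nonneg (α := ℝ) n]
  have hδltg : δ < g := lt_trans hδη hηltg
  have hkn : ∀ v, ((k v : ℝ) + 1) ≤ (n : ℝ) := by
    intro v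
    exact_mod_cast hk_lt v
  have hb1 : ∀ v, ((k v : ℝ) + 1) * η + η < g := by
    intro v
    nlinarith [hkn v, hη_pos]
  have hb2 : ∀ v, ((k v : ℝ) + 1) * η < g := fun v => by nlinarith [hb1 v, hη_pos]
  set Bp : α → ℝ := fun v => B v + ((k v : ℝ) + 1) * η with hBp
  have hBp_eq : ∀ v, Bp v = B v + ((k v : ℝ) + 1) * η := fun v => rfl
  have hB_lt_Bp : ∀ v, B v < Bp v := by
    intro v
    rw [hBp_eq]
    have : 0 < ((k v : ℝ) + 1) * η := by positivity
    linarith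
  have hA_lt_Bp : ∀ v, A v < Bp v := fun v => lt_of_le_of_lt (hAB v) (hB_lt_Bp v)
  have hxB : ∀ x ∈ E, ∀ v, (x ≤ Bp v ↔ x ≤ B v) := by
    intro x hx v
    rw [hBp_eq]
    constructor
    · intro h
      by_contra hc
      push_neg at hc
      have h1 := hgap _ (hBE v) _ hx hc
      have h2 := hb2 v
      linarith
    · intro h
      have : 0 < ((k v : ℝ) + 1) * η := by positivity
      linarith
  have hxBδ : ∀ x ∈ E, ∀ v, (x - δ < Bp v ↔ x ≤ B v) := by
    intro x hx v
    rw [hBp_eq]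
    constructor
    · intro h
      by_contra hc
      push_neg at hc
      have h1 := hgap _ (hBE v) _ hx hc
      have h2 := hb1 v
      linarith
    · intro h
      have : 0 < ((k v : ℝ) + 1) * η := by positivity
      linarith
  have hAx : ∀ v, ∀ x ∈ E, (A v < x + δ ↔ A v ≤ x) := by
    intro v x hx
    constructor
    · intro h
      by_contra hc
      push_neg at hc
      have h1 := hgap _ hx _ (hAE v) hc
      linarith
    · intro h; linarith
  clear_value η δ Bp
  set Z : ℝ → ℝ × ℝ := fun t => (t - δ, -t - δ) with hZ
  set P : α → ℝ × ℝ := fun v => (Bp v, -(A v)) with hP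
  set V : Finset (ℝ × ℝ) := Finset.univ.image P ∪ E.image Z with hV
  have hPV : ∀ v, P v ∈ V :=
    fun v => Finset.mem_union_left _ (Finset.mem_image_of_mem P (Finset.mem_univ v))
  have hZV : ∀ t ∈ E, Z t ∈ V := fun t ht => Finset.mem_union_right _ (Finset.mem_image_of_mem Z ht)
  have hmemV : ∀ x ∈ V, (∃ v, P v = x) ∨ ∃ t ∈ E, Z t = x := by
    intro x hx
    rw [hV, Finset.mem_union] at hx
    rcases hx with h | h
    · left
      obtain ⟨v, _, hv⟩ := Finset.mem_image.1 h
      exact ⟨v, hv⟩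
    · right
      obtain ⟨t, ht, hts⟩ := Finset.mem_image.1 h
      exact ⟨t, ht, hts⟩
  clear_value Z P V
  have hprecZP : ∀ t ∈ E, ∀ v, (prec (Z t) (P v) ↔ (A v ≤ t ∧ t ≤ B v)) := by
    intro t ht v
    simp only [hZ, hP, prec]
    constructor
    · rintro ⟨h1, h2⟩
      refine ⟨(hAx v t ht).1 (by linarith), (hxBδ t ht v).1 h1⟩
    · rintro ⟨h1, h2⟩
      refine ⟨(hxBδ t ht v).2 h2, by linarith⟩
  have hprecPZ : ∀ v t, ¬ prec (P v) (Z t) := by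
    intro v t h
    simp only [hP, hZ, prec] at h
    obtain ⟨h1, h2⟩ := h
    have := hA_lt_Bp v
    linarith
  have hprecZZ : ∀ t t', ¬ prec (Z t) (Z t') := by
    intro t t' h
    simp only [hZ, prec] at h
    obtain ⟨h1, h2⟩ := h
    linarith
  have hPZne : ∀ v t, P v ≠ Z t := by
    intro v t h
    simp only [hP, hZ, Prod.mk.injEq] at h
    obtain ⟨h1, h2⟩ := h
    have := hA_lt_Bp v
    linarith
  have hPinj : Function.Injective P := by
    intro u v h
    simp only [hP, Prod.mk.injEq] at h
    obtain ⟨h1, h2⟩ := h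
    rw [hBp_eq, hBp_eq] at h1
    have hBuv : B u = B v := by
      rcases lt_trichotomy (B u) (B v) with hlt | heq | hlt
      · exfalso
        have hg1 := hgap _ (hBE u) _ (hBE v) hlt
        have := hb2 u
        have h0 : (0:ℝ) < ((k v : ℝ) + 1) * η := by positivity
        linarith
      · exact heq
      · exfalso
        have hg1 := hgap _ (hBE v) _ (hBE u) hlt
        have := hb2 v
        have h0 : (0:ℝ) < ((k u : ℝ) + 1) * η := by positivity
        linarith
    have hkuv : ((k u : ℝ)) = (k v : ℝ) := by
      have he : ((k u : ℝ) + 1) * η = ((k v : ℝ) + 1) * η := by linarith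
      have := mul_right_cancel₀ (ne_of_gt hη_pos) he
      linarith
    exact hk_inj (by exact_mod_cast hkuv)
  have hQsym : ∀ x y : ℝ × ℝ,
      (prec x y ∨ prec y x ∨ ∃ w ∈ V, prec w x ∧ prec w y) →
      (prec y x ∨ prec x y ∨ ∃ w ∈ V, prec w y ∧ prec w x) := by
    intro x y h
    rcases h with h | h | ⟨w, hw, h1, h2⟩
    · exact Or.inr (Or.inl h)
    · exact Or.inl h
    · exact Or.inr (Or.inr ⟨w, hw, h2, h1⟩)
  have hQPP : ∀ u v : α,
      ((prec (P u) (P v) ∨ prec (P v) (P u) ∨ ∃ w ∈ V, prec w (P u) ∧ prec w (P v))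
        ↔ (A u ≤ B v ∧ A v ≤ B u)) := by
    intro u v
    constructor
    · rintro (h | h | ⟨w, hw, hw1, hw2⟩)
      · simp only [hP, prec] at h
        obtain ⟨h1, h2⟩ := h
        constructor
        · exact (hxB _ (hAE u) v).1 (by linarith [hA_lt_Bp u])
        · linarith [hAB u]
      · simp only [hP, prec] at h
        obtain ⟨h1, h2⟩ := h
        constructor
        · linarith [hAB v]
        · exact (hxB _ (hAE v) u).1 (by linarith [hA_lt_Bp v])
      · rcases hmemV w hw with ⟨w', rfl⟩ | ⟨t, ht, rfl⟩
        · simp only [hP, prec] at hw1 hw2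
          obtain ⟨h1a, h1b⟩ := hw1
          obtain ⟨h2a, h2b⟩ := hw2
          constructor
          · exact (hxB _ (hAE u) v).1 (by linarith [hAB w', hB_lt_Bp w'])
          · exact (hxB _ (hAE v) u).1 (by linarith [hAB w', hB_lt_Bp w'])
        · have h1 := (hprecZP t ht u).1 hw1
          have h2 := (hprecZP t ht v).1 hw2
          exact ⟨le_trans h1.1 h2.2, le_trans h2.1 h1.2⟩
    · rintro ⟨h1, h2⟩
      have hmaxE : max (A u) (A v) ∈ E := by
        rcases le_total (A u) (A v) with h | h
        · rw [max_eq_right h]; exact hAE v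
        · rw [max_eq_left h]; exact hAE u
      refine Or.inr (Or.inr ⟨Z (max (A u) (A v)), hZV _ hmaxE, ?_, ?_⟩)
      · exact (hprecZP _ hmaxE u).2 ⟨le_max_left _ _, max_le (hAB u) h2⟩
      · exact (hprecZP _ hmaxE v).2 ⟨le_max_right _ _, max_le h1 (hAB v)⟩
  have hQPZ : ∀ v : α, ∀ t ∈ E,
      ((prec (P v) (Z t) ∨ prec (Z t) (P v) ∨ ∃ w ∈ V, prec w (P v) ∧ prec w (Z t))
        ↔ (A v ≤ t ∧ t ≤ B v)) := by
    intro v t ht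
    constructor
    · rintro (h | h | ⟨w, hw, hw1, hw2⟩)
      · exact absurd h (hprecPZ v t)
      · exact (hprecZP t ht v).1 h
      · rcases hmemV w hw with ⟨w', rfl⟩ | ⟨t', ht', rfl⟩
        · exact absurd hw2 (hprecPZ w' t)
        · exact absurd hw2 (hprecZZ t' t)
    · intro h
      exact Or.inr (Or.inl ((hprecZP t ht v).2 h))
  have hQZZ : ∀ t ∈ E, ∀ t' ∈ E,
      ¬ (prec (Z t) (Z t') ∨ prec (Z t') (Z t) ∨ ∃ w ∈ V, prec w (Z t) ∧ prec w (Z t')) := by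
    intro t ht t' ht' h
    rcases h with h | h | ⟨w, hw, hw1, hw2⟩
    · exact hprecZZ t t' h
    · exact hprecZZ t' t h
    · rcases hmemV w hw with ⟨w', rfl⟩ | ⟨s, hs, rfl⟩
      · exact hprecPZ w' t hw1
      · exact hprecZZ s t hw1
  have hAdjIff : ∀ (x y : ℝ × ℝ) (hx : x ∈ V) (hy : y ∈ V),
      ((phylogenyGraph V).Adj ⟨x, hx⟩ ⟨y, hy⟩ ↔
        (x ≠ y ∧ (prec x y ∨ prec y x ∨ ∃ w ∈ V, prec w x ∧ prec w y))) := by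
    intro x y hx hy
    constructor
    · intro h
      obtain ⟨h1, h2⟩ := h
      exact ⟨fun hh => h1 (Subtype.ext hh), h2⟩
    · rintro ⟨h1, h2⟩
      exact ⟨fun hh => h1 (congrArg Subtype.val hh), h2⟩
  set Jf : {p : ℝ × ℝ // p ∈ V} → Set ℝ :=
    fun x => if x.1.1 < -x.1.2 then Set.Icc (x.1.1 + δ) (x.1.1 + δ)
      else Set.Icc (-x.1.2) (x.1.1) with hJf
  have hJfP : ∀ v (h : P v ∈ V), Jf ⟨P v, h⟩ = Set.Icc (A v) (Bp v) := by
    intro v h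
    have hcond : ¬ ((P v).1 < -(P v).2) := by
      simp only [hP, neg_neg]
      exact not_lt.2 (hA_lt_Bp v).le
    simp only [hJf, hcond, if_false]
    simp [hP]
  have hJfZ : ∀ t (h : Z t ∈ V), Jf ⟨Z t, h⟩ = Set.Icc t t := by
    intro t h
    have hcond : (Z t).1 < -(Z t).2 := by
      simp only [hZ]
      simp only [neg_sub, neg_neg]
      linarith
    simp only [hJf, hcond, if_true]
    simp only [hZ]
    norm_num
  clear_value Jf
  have hIccPP : ∀ u v : α,
      ((Set.Icc (A u) (Bp u) ∩ Set.Icc (A v) (Bp v)).Nonempty ↔ (A u ≤ B v ∧ A v ≤ B u)) := by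
    intro u v
    rw [Set.Icc_inter_Icc, Set.nonempty_Icc, max_le_iff, le_min_iff, le_min_iff]
    constructor
    · rintro ⟨⟨_, h2⟩, h3, _⟩
      exact ⟨(hxB _ (hAE u) v).1 h2, (hxB _ (hAE v) u).1 h3⟩
    · rintro ⟨h1, h2⟩
      exact ⟨⟨(hA_lt_Bp u).le, (hxB _ (hAE u) v).2 h1⟩,
        (hxB _ (hAE v) u).2 h2, (hA_lt_Bp v).le⟩
  have hIccPZ : ∀ u : α, ∀ t ∈ E,
      ((Set.Icc (A u) (Bp u) ∩ Set.Icc t t).Nonempty ↔ (A u ≤ t ∧ t ≤ B u)) := by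
    intro u t ht
    rw [Set.Icc_self, Set.inter_singleton_nonempty, Set.mem_Icc]
    constructor
    · rintro ⟨h1, h2⟩
      exact ⟨h1, (hxB _ ht u).1 h2⟩
    · rintro ⟨h1, h2⟩
      exact ⟨h1, (hxB _ ht u).2 h2⟩
  have hChar : ∀ (x y : {p : ℝ × ℝ // p ∈ V}), x ≠ y →
      ((phylogenyGraph V).Adj x y ↔ (Jf x ∩ Jf y).Nonempty) := by
    rintro ⟨x, hx⟩ ⟨y, hy⟩ hne
    have hxyne : x ≠ y := fun h => hne (Subtype.ext h)
    rw [hAdjIff x y hx hy]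
    rcases hmemV x hx with ⟨u, rfl⟩ | ⟨t, ht, rfl⟩ <;>
      rcases hmemV y hy with ⟨v, rfl⟩ | ⟨s, hs, rfl⟩
    · rw [hJfP u hx, hJfP v hy, hIccPP u v, hQPP u v]
      simp [hxyne]
    · rw [hJfP u hx, hJfZ s hy, hIccPZ u s hs, hQPZ u s hs]
      simp [hxyne]
    · rw [hJfZ t hx, hJfP v hy, Set.inter_comm, hIccPZ v t ht]
      constructor
      · rintro ⟨_, h⟩
        exact (hQPZ v t ht).1 (hQsym _ _ h)
      · intro h
        exact ⟨hxyne, hQsym _ _ ((hQPZ v t ht).2 h)⟩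
    · rw [hJfZ t hx, hJfZ s hy]
      constructor
      · rintro ⟨_, h⟩
        exact absurd h (hQZZ t ht s hs)
      · rintro ⟨r, hr1, hr2⟩
        exfalso
        apply hxyne
        have h1 : r = t := le_antisymm (Set.mem_Icc.1 hr1).2 (Set.mem_Icc.1 hr1).1
        have h2 : r = s := le_antisymm (Set.mem_Icc.1 hr2).2 (Set.mem_Icc.1 hr2).1
        rw [← h1, h2]
  refine ⟨V, ⟨Jf, ?_, hChar⟩, ⟨⟨fun a => ⟨P a, hPV a⟩,
    fun a b h => hPinj (congrArg Subtype.val h)⟩, ?_⟩⟩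
  · rintro ⟨x, hx⟩
    rcases hmemV x hx with ⟨v, rfl⟩ | ⟨t, ht, rfl⟩
    · exact ⟨A v, Bp v, (hA_lt_Bp v).le, hJfP v hx⟩
    · exact ⟨t, t, le_refl t, hJfZ t hx⟩
  · intro a b
    show (phylogenyGraph V).Adj ⟨P a, hPV a⟩ ⟨P b, hPV b⟩ ↔ G.Adj a b
    by_cases hab : a = b
    · subst hab
      simp
    · have hne : P a ≠ P b := fun h => hab (hPinj h)
      rw [hAdjIff (P a) (P b) (hPV a) (hPV b), hQPP a b, hAdj a b hab]
      simp [hne]
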